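/- Restricted to a linear subspace E of ℝⁿ containing a vector v whose coordinates are linearly independent over ℚ, the translation action on the torus is uniquely ergodic in the following sense: for every continuous h : 𝕋ⁿ → ℝ and every u ∈ 𝕋ⁿ, (1/|B_R^E|) ∫_{B_R^E} h(u − t) dt → ∫_{𝕋ⁿ} h dμ as R → ∞, where μ is the Haar measure on 𝕋ⁿ, B_R^E is the ball of radius R in E centered at 0, and the convergence is uniform in u. -/

import Mathlib

open Metric Set MeasureTheory ENNReal

variable {n : ℕ}

/-- The `n`-dimensional torus `𝕋ⁿ = ℝⁿ/ℤⁿ`, as a product of circles. -/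
abbrev Torus (n : ℕ) := Fin n → AddCircle (1 : ℝ)

/-- The projection `ℝⁿ → 𝕋ⁿ`. -/
noncomputable def torusProj (t : EuclideanSpace ℝ (Fin n)) : Torus n :=
  fun i => (t i : AddCircle (1 : ℝ))

open Filter Topology


namespace TorusUE

variable {n : ℕ}

/-- fourier of a difference -/
lemma fourier_sub {T : ℝ} {m : ℤ} {a b : AddCircle T} :
    fourier m (a - b) = fourier m a * fourier (-m) b := by
  rw [fourier_apply, fourier_apply, fourier_apply,
    show m • (a - b) = m • a + (-m) • b by rw [smul_sub, neg_smul, sub_eq_add_neg],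
    AddCircle.toCircle_add]
  push_cast
  ring

/-- characters of the torus -/
noncomputable def char (k : Fin n → ℤ) : C(Torus n, ℂ) :=
  ∏ i, (fourier (k i)).comp ⟨fun x : Torus n => x i, continuous_apply i⟩

lemma char_apply (k : Fin n → ℤ) (x : Torus n) :
    char k x = ∏ i, fourier (k i) (x i) := by
  simp [char, ContinuousMap.prod_apply]

lemma char_zero_eq : (char (0 : Fin n → ℤ)) = 1 := by
  ext x
  simp [char_apply, fourier_zero]

lemma char_mul (k l : Fin n → ℤ) : char k * char l = char (k + l) := by
  ext x
  simp only [ContinuousMap.mul_apply, char_apply, ← Finset.prod_mul_distrib]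
  exact Finset.prod_congr rfl fun i _ => (fourier_add).symm

lemma char_star (k : Fin n → ℤ) : star (char k) = char (-k) := by
  ext x
  simp only [ContinuousMap.star_apply, char_apply, Pi.neg_apply]
  rw [star_prod]
  exact Finset.prod_congr rfl fun i _ => by rw [RCLike.star_def, ← fourier_neg]

lemma char_norm_one (k : Fin n → ℤ) (x : Torus n) : ‖char k x‖ = 1 := by
  rw [char_apply, norm_prod]
  exact Finset.prod_eq_one fun i _ => by
    rw [fourier_apply]; exact Circle.norm_coe _


lemma char_sub (k : Fin n → ℤ) (u w : Torus n) :
    char k (u - w) = char k u * char (-k) w := by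
  simp only [char_apply, Pi.neg_apply, ← Finset.prod_mul_distrib]
  exact Finset.prod_congr rfl fun i _ => by
    rw [Pi.sub_apply]; exact fourier_sub

instance : IsProbabilityMeasure (volume : Measure (Torus n)) := by
  constructor
  rw [volume_pi, Measure.pi_univ]
  simp

lemma integral_fourier_eq_zero {m : ℤ} (hm : m ≠ 0) :
    ∫ x : AddCircle (1:ℝ), fourier m x = 0 := by
  have key : ∫ x : AddCircle (1:ℝ), fourier m x
      = ∫ x : AddCircle (1:ℝ), fourier m (x + ((((1:ℝ)/2/(m:ℝ)) : ℝ) : AddCircle (1:ℝ))) := by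
    rw [integral_add_right_eq_self (μ := (volume : Measure (AddCircle (1:ℝ))))
      (fun x => fourier m x) ((((1:ℝ)/2/(m:ℝ)) : ℝ) : AddCircle (1:ℝ))]
  have hneg : ∀ x : AddCircle (1:ℝ),
      fourier m (x + ((((1:ℝ)/2/(m:ℝ)) : ℝ) : AddCircle (1:ℝ))) = -fourier m x :=
    fun x => fourier_add_half_inv_index hm one_pos x
  simp_rw [hneg] at key
  rw [integral_neg] at key
  exact add_self_eq_zero.mp (eq_neg_iff_add_eq_zero.mp key)

lemma integral_char (k : Fin n → ℤ) :
    ∫ x : Torus n, char k x = if k = 0 then 1 else 0 := by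
  classical
  have := MeasureTheory.integral_fintype_prod_eq_prod (ι := Fin n) (μ := fun _ => (volume : Measure (AddCircle (1:ℝ))))
    (f := fun i (z : AddCircle (1:ℝ)) => fourier (k i) z)
  simp_rw [char_apply]
  rw [volume_pi, this]
  by_cases hk : k = 0
  · subst hk
    simp [fourier_zero, measureReal_def, AddCircle.measure_univ]
  · obtain ⟨i, hi⟩ : ∃ i, k i ≠ 0 := by
      by_contra hc; push_neg at hc; exact hk (funext hc)
    rw [if_neg hk]
    exact Finset.prod_eq_zero (Finset.mem_univ i) (integral_fourier_eq_zero hi)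

/-- the span of the characters -/
noncomputable def charSpan (n : ℕ) : Submodule ℂ C(Torus n, ℂ) :=
  Submodule.span ℂ (Set.range (char (n := n)))

lemma char_mem_charSpan (k : Fin n → ℤ) : char k ∈ charSpan n :=
  Submodule.subset_span ⟨k, rfl⟩

lemma charSpan_mul_mem {a b : C(Torus n, ℂ)} (ha : a ∈ charSpan n) (hb : b ∈ charSpan n) :
    a * b ∈ charSpan n := by
  have hchar : ∀ k : Fin n → ℤ, ∀ b ∈ charSpan n, char k * b ∈ charSpan n := by
    intro k b hb
    refine Submodule.span_induction ?_ ?_ ?_ ?_ hb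
    · rintro x ⟨l, rfl⟩
      rw [char_mul]
      exact char_mem_charSpan _
    · rw [mul_zero]; exact Submodule.zero_mem _
    · intro x y _ _ hx hy
      rw [mul_add]; exact Submodule.add_mem _ hx hy
    · intro c x _ hx
      rw [mul_smul_comm]; exact Submodule.smul_mem _ _ hx
  refine Submodule.span_induction ?_ ?_ ?_ ?_ ha
  · rintro x ⟨k, rfl⟩; exact hchar k b hb
  · rw [zero_mul]; exact Submodule.zero_mem _
  · intro x y _ _ hx hy
    rw [add_mul]; exact Submodule.add_mem _ hx hy
  · intro c x _ hx
    rw [smul_mul_assoc]; exact Submodule.smul_mem _ _ hx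

lemma charSpan_star_mem {a : C(Torus n, ℂ)} (ha : a ∈ charSpan n) :
    star a ∈ charSpan n := by
  refine Submodule.span_induction ?_ ?_ ?_ ?_ ha
  · rintro x ⟨k, rfl⟩
    rw [char_star]; exact char_mem_charSpan _
  · rw [star_zero]; exact Submodule.zero_mem _
  · intro x y _ _ hx hy
    rw [star_add]; exact Submodule.add_mem _ hx hy
  · intro c x _ hx
    rw [star_smul]; exact Submodule.smul_mem _ _ hx

/-- the star subalgebra generated by the characters -/
noncomputable def charAlg (n : ℕ) : StarSubalgebra ℂ C(Torus n, ℂ) where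
  toSubalgebra := (charSpan n).toSubalgebra
    (by rw [← char_zero_eq]; exact char_mem_charSpan _)
    (fun x y hx hy => charSpan_mul_mem hx hy)
  star_mem' := charSpan_star_mem

lemma mem_charAlg_iff {a : C(Torus n, ℂ)} : a ∈ charAlg n ↔ a ∈ charSpan n := Iff.rfl

lemma charAlg_separatesPoints : (charAlg n).SeparatesPoints := by
  intro x y hxy
  obtain ⟨i, hi⟩ : ∃ i, x i ≠ y i := by
    by_contra hc; push_neg at hc; exact hxy (funext hc)
  classical
  refine ⟨_, ⟨char (Pi.single i 1), char_mem_charSpan _, rfl⟩, ?_⟩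
  have hval : ∀ z : Torus n, char (Pi.single i 1) z = fourier 1 (z i) := by
    intro z
    rw [char_apply]
    rw [Finset.prod_eq_single i (fun j _ hj => by
      rw [Pi.single_eq_of_ne hj, fourier_zero]) (fun hh => absurd (Finset.mem_univ i) hh)]
    rw [Pi.single_eq_same]
  dsimp only
  rw [hval, hval, fourier_one, fourier_one]
  intro hc
  exact hi (AddCircle.injective_toCircle one_ne_zero (Subtype.coe_inj.mp hc))

lemma exists_char_approx (g : C(Torus n, ℂ)) {ε : ℝ} (hε : 0 < ε) :
    ∃ p ∈ charSpan n, ‖g - p‖ < ε := by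
  have hdense : (charAlg n).topologicalClosure = ⊤ :=
    ContinuousMap.starSubalgebra_topologicalClosure_eq_top_of_separatesPoints _
      charAlg_separatesPoints
  have hg : g ∈ closure ((charAlg n) : Set C(Torus n, ℂ)) := by
    have : g ∈ (charAlg n).topologicalClosure := by rw [hdense]; trivial
    exact this
  obtain ⟨p, hp, hdist⟩ := Metric.mem_closure_iff.mp hg ε hε
  exact ⟨p, hp, by rwa [← dist_eq_norm]⟩

/-- the linear functional on ℝⁿ associated with a frequency vector -/
noncomputable def phi (k : Fin n → ℤ) : EuclideanSpace ℝ (Fin n) →ₗ[ℝ] ℝ :=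
  (2 * Real.pi) • ∑ i, (k i : ℝ) •
    ((EuclideanSpace.proj i : EuclideanSpace ℝ (Fin n) →L[ℝ] ℝ) :
      EuclideanSpace ℝ (Fin n) →ₗ[ℝ] ℝ)

lemma phi_apply (k : Fin n → ℤ) (t : EuclideanSpace ℝ (Fin n)) :
    phi k t = 2 * Real.pi * ∑ i, (k i : ℝ) * t i := by
  simp [phi, Finset.mul_sum]

lemma char_torusProj (k : Fin n → ℤ) (t : EuclideanSpace ℝ (Fin n)) :
    char k (torusProj t) = Complex.exp ((phi k t : ℝ) * Complex.I) := by
  rw [char_apply]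
  have : ∀ i, fourier (k i) ((torusProj t) i)
      = Complex.exp (2 * Real.pi * Complex.I * (k i) * (t i) / 1) := by
    intro i
    exact fourier_coe_apply
  simp_rw [this, ← Complex.exp_sum]
  congr 1
  rw [phi_apply]
  push_cast
  rw [Finset.mul_sum, Finset.sum_mul]
  exact Finset.sum_congr rfl fun i _ => by ring

lemma continuous_torusProj : Continuous (torusProj (n := n)) := by
  refine continuous_pi fun i => ?_
  exact (AddCircle.continuous_mk' 1).comp (EuclideanSpace.proj i).continuous

section Decay

variable {F : Type*} [NormedAddCommGroup F] [InnerProductSpace ℝ F]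
  [FiniteDimensional ℝ F] [MeasurableSpace F] [BorelSpace F]

lemma ball_avg_decay (φ : F →ₗ[ℝ] ℝ) (hφ : φ ≠ 0) :
    Tendsto (fun R : ℝ => (volume (closedBall (0:F) R)).toReal⁻¹ *
      ‖∫ t in closedBall (0:F) R, Complex.exp (φ t * Complex.I)‖) atTop (nhds 0) := by
  classical
  obtain ⟨u, hu⟩ : ∃ u, φ u ≠ 0 := by
    by_contra hc
    push_neg at hc
    exact hφ (LinearMap.ext fun x => by simpa using hc x)
  set w : F := (Real.pi / φ u) • u with hw_def
  have hw : φ w = Real.pi := by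
    rw [hw_def, LinearMap.map_smul, smul_eq_mul, div_mul_cancel₀ _ hu]
  set c : ℝ := ‖w‖ with hc_def
  have hc0 : 0 ≤ c := norm_nonneg _
  set m : ℕ := Module.finrank ℝ F with hm_def
  have hm1 : 1 ≤ m := by
    have h0 : u ≠ 0 := fun h => hu (by simp [h])
    have : Nontrivial F := ⟨u, 0, h0⟩
    exact Module.finrank_pos
  set f : F → ℂ := fun t => Complex.exp (φ t * Complex.I) with hf_def
  have hfc : Continuous f :=
    Complex.continuous_exp.comp
      ((Complex.continuous_ofReal.comp φ.continuous_of_finiteDimensional).mul continuous_const)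
  have hfnorm : ∀ t, ‖f t‖ = 1 := by
    intro t
    simp [hf_def, Complex.norm_exp]
  have hint : ∀ s : Set F, IsCompact s → IntegrableOn f s := fun s hs =>
    hfc.continuousOn.integrableOn_compact hs
  set V : ℝ := (volume (closedBall (0:F) 1)).toReal with hV_def
  have hball : ∀ (x : F) (r : ℝ), 0 ≤ r →
      (volume (closedBall x r)).toReal = r ^ m * V := by
    intro x r hr
    rw [Measure.addHaar_closedBall' volume x hr, toReal_mul, toReal_ofReal (by positivity)]
  have hV0 : 0 < V :=
    toReal_pos (measure_closedBall_pos volume _ one_pos).ne'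
      measure_closedBall_lt_top.ne
  have key : ∀ R : ℝ, max c 1 ≤ R →
      (volume (closedBall (0:F) R)).toReal⁻¹ *
        ‖∫ t in closedBall (0:F) R, f t‖ ≤ 1 - ((R - c) / R) ^ m := by
    intro R hR
    have hRc : c ≤ R := le_trans (le_max_left _ _) hR
    have hR1 : (1:ℝ) ≤ R := le_trans (le_max_right _ _) hR
    have hR0 : 0 < R := lt_of_lt_of_le one_pos hR1
    have hKS : closedBall (0:F) (R - c) ⊆ closedBall (0:F) R :=
      closedBall_subset_closedBall (by linarith)
    have hKT : closedBall (0:F) (R - c) ⊆ closedBall w R := fun x hx => by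
      simp only [mem_closedBall, dist_zero_right] at hx
      simp only [mem_closedBall, dist_eq_norm]
      calc ‖x - w‖ ≤ ‖x‖ + ‖w‖ := norm_sub_le _ _
        _ ≤ R := by rw [← hc_def]; linarith
    have htrans : ∫ t in closedBall (0:F) R, f (t + w) = ∫ t in closedBall w R, f t := by
      have h1 : MeasurePreserving (· + w) (volume : Measure F) volume :=
        measurePreserving_add_right volume w
      have h2 : MeasurableEmbedding (· + w) :=
        (MeasurableEquiv.addRight w).measurableEmbedding
      have h3 : (· + w) ⁻¹' closedBall w R = closedBall (0:F) R := by
        ext x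
        simp only [mem_preimage, mem_closedBall, dist_eq_norm, dist_zero_right,
          add_sub_cancel_right, sub_zero]
      rw [← h3]
      exact h1.setIntegral_preimage_emb h2 f _
    have hneg : ∫ t in closedBall (0:F) R, f (t + w)
        = -∫ t in closedBall (0:F) R, f t := by
      have hfw : ∀ t, f (t + w) = -f t := by
        intro t
        simp only [hf_def, map_add, hw, Complex.ofReal_add, add_mul, Complex.exp_add,
          Complex.exp_pi_mul_I]
        ring
      simp_rw [hfw]
      exact integral_neg _
    have hTS : ∫ t in closedBall w R, f t = -∫ t in closedBall (0:F) R, f t := by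
      rw [← htrans, hneg]
    have hdiff : (2:ℝ) * ‖∫ t in closedBall (0:F) R, f t‖ ≤
        (volume (closedBall (0:F) R \ closedBall (0:F) (R - c))).toReal +
        (volume (closedBall w R \ closedBall (0:F) (R - c))).toReal := by
      have e1 := integral_diff (f := f) (μ := volume) measurableSet_closedBall
        (hint _ (isCompact_closedBall (0:F) R)) hKS
      have e2 := integral_diff (f := f) (μ := volume) measurableSet_closedBall
        (hint _ (isCompact_closedBall w R)) hKT
      have e3 : (2:ℂ) * ∫ t in closedBall (0:F) R, f t
          = (∫ t in closedBall (0:F) R \ closedBall (0:F) (R - c), f t)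
            - ∫ t in closedBall w R \ closedBall (0:F) (R - c), f t := by
        rw [e1, e2, hTS]; ring
      have b1 : ‖∫ t in closedBall (0:F) R \ closedBall (0:F) (R - c), f t‖ ≤
          1 * (volume (closedBall (0:F) R \ closedBall (0:F) (R - c))).toReal :=
        norm_setIntegral_le_of_norm_le_const
          (lt_of_le_of_lt (measure_mono diff_subset) measure_closedBall_lt_top)
          (fun x _ => le_of_eq (hfnorm x))
      have b2 : ‖∫ t in closedBall w R \ closedBall (0:F) (R - c), f t‖ ≤
          1 * (volume (closedBall w R \ closedBall (0:F) (R - c))).toReal :=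
        norm_setIntegral_le_of_norm_le_const
          (lt_of_le_of_lt (measure_mono diff_subset) measure_closedBall_lt_top)
          (fun x _ => le_of_eq (hfnorm x))
      calc (2:ℝ) * ‖∫ t in closedBall (0:F) R, f t‖
          = ‖(2:ℂ) * ∫ t in closedBall (0:F) R, f t‖ := by rw [norm_mul]; norm_num
        _ = _ := by rw [e3]
        _ ≤ _ := norm_sub_le _ _
        _ ≤ 1 * (volume (closedBall (0:F) R \ closedBall (0:F) (R - c))).toReal +
            1 * (volume (closedBall w R \ closedBall (0:F) (R - c))).toReal :=
            add_le_add b1 b2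
        _ = _ := by ring
    have hmS : (volume (closedBall (0:F) R \ closedBall (0:F) (R - c))).toReal
        = R ^ m * V - (R - c) ^ m * V := by
      rw [measure_diff hKS measurableSet_closedBall.nullMeasurableSet
        measure_closedBall_lt_top.ne,
        toReal_sub_of_le (measure_mono hKS) measure_closedBall_lt_top.ne,
        hball _ _ (by linarith), hball _ _ (by linarith)]
    have hmT : (volume (closedBall w R \ closedBall (0:F) (R - c))).toReal
        = R ^ m * V - (R - c) ^ m * V := by
      rw [measure_diff hKT measurableSet_closedBall.nullMeasurableSet
        measure_closedBall_lt_top.ne,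
        toReal_sub_of_le (measure_mono hKT) measure_closedBall_lt_top.ne,
        hball _ _ (by linarith), hball _ _ (by linarith)]
    have hIle : ‖∫ t in closedBall (0:F) R, f t‖ ≤ R ^ m * V - (R - c) ^ m * V := by
      rw [hmS, hmT] at hdiff; linarith
    have hvol : (volume (closedBall (0:F) R)).toReal = R ^ m * V :=
      hball _ _ (by linarith)
    rw [hvol]
    have hpos : 0 < R ^ m * V := by positivity
    rw [inv_mul_le_iff₀ hpos]
    calc ‖∫ t in closedBall (0:F) R, f t‖ ≤ R ^ m * V - (R - c) ^ m * V := hIle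
      _ = R ^ m * V * (1 - ((R - c) / R) ^ m) := by
          rw [div_pow, mul_sub, mul_one, mul_right_comm, mul_div_assoc',
            mul_div_cancel_left₀ _ (pow_ne_zero _ hR0.ne')]
  -- limit of the upper bound
  have l0 : Tendsto (fun R : ℝ => c / R) atTop (nhds 0) :=
    tendsto_const_nhds.div_atTop tendsto_id
  have l1 : Tendsto (fun R : ℝ => (R - c) / R) atTop (nhds 1) := by
    have : Tendsto (fun R : ℝ => 1 - c / R) atTop (nhds (1 - 0)) :=
      tendsto_const_nhds.sub l0
    rw [sub_zero] at this
    refine this.congr' ?_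
    filter_upwards [eventually_gt_atTop (0:ℝ)] with R hR
    field_simp
  have l2 : Tendsto (fun R : ℝ => 1 - ((R - c) / R) ^ m) atTop (nhds 0) := by
    have : Tendsto (fun R : ℝ => 1 - ((R - c) / R) ^ m) atTop (nhds (1 - 1 ^ m)) :=
      tendsto_const_nhds.sub (l1.pow m)
    simpa using this
  refine squeeze_zero' ?_ ?_ l2
  · filter_upwards with R
    positivity
  · filter_upwards [eventually_ge_atTop (max c 1)] with R hR
    exact key R hR

end Decay

end TorusUE


open TorusUE

/-- If the subspace `E` of `ℝⁿ` contains a vector whose coordinates are linearly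
independent over `ℚ`, then the translation action of `E` on the torus `𝕋ⁿ` is
uniquely ergodic: Birkhoff averages over balls of `E` of any continuous function
converge to its Haar mean, uniformly in the starting point. -/
theorem torus_unique_ergodicity
    (E : Submodule ℝ (EuclideanSpace ℝ (Fin n)))
    (v : EuclideanSpace ℝ (Fin n)) (hv : v ∈ E)
    (hind : LinearIndependent ℚ (fun i : Fin n => v i))
    (h : Torus n → ℝ) (hcont : Continuous h) :
    ∀ ε > 0, ∃ R₀ : ℝ, ∀ R ≥ R₀, ∀ u : Torus n,
      |(volume (closedBall (0 : E) R)).toReal⁻¹ *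
          (∫ t in closedBall (0 : E) R, h (u - torusProj (t : EuclideanSpace ℝ (Fin n)))) -
        ∫ x, h x| ≤ ε := by


  classical
  intro ε hε
  -- the complex-valued version of h
  set g : C(Torus n, ℂ) :=
    (⟨Complex.ofReal, Complex.continuous_ofReal⟩ : C(ℝ, ℂ)).comp ⟨h, hcont⟩ with hg_def
  obtain ⟨p, hp, hgp⟩ := exists_char_approx g (show (0:ℝ) < ε/3 by linarith)
  obtain ⟨c, hc⟩ := Finsupp.mem_span_range_iff_exists_finsupp.mp hp
  set s : Finset (Fin n → ℤ) := c.support with hs_def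
  have hps : p = ∑ k ∈ s, c k • char k := by rw [← hc]; rfl
  set C : ℝ := ∑ k ∈ s, ‖c k‖ with hC_def
  have hC0 : 0 ≤ C := Finset.sum_nonneg fun _ _ => norm_nonneg _
  set ε₂ : ℝ := ε / (3 * (C + 1)) with hε₂_def
  have hε₂0 : 0 < ε₂ := by positivity
  -- the frequencies do not vanish on E
  have hsum_ne : ∀ k : Fin n → ℤ, k ≠ 0 → (∑ i, (k i : ℝ) * v i) ≠ 0 := by
    intro k hk hsum
    apply hk
    funext i
    have hzero : ∑ i ∈ Finset.univ, ((k i : ℚ)) • v i = 0 := by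
      have heq : ∀ i ∈ Finset.univ, ((k i : ℚ)) • v i = (k i : ℝ) * v i := by
        intro i _
        rw [Rat.smul_def]
        push_cast
        ring
      rw [Finset.sum_congr rfl heq, hsum]
    have := linearIndependent_iff'.mp hind Finset.univ (fun i => (k i : ℚ)) hzero i
      (Finset.mem_univ i)
    have h2 : (k i : ℚ) = 0 := by simpa using this
    exact_mod_cast h2
  have hphiE : ∀ k : Fin n → ℤ, k ≠ 0 → ((phi k).comp E.subtype) ≠ 0 := by
    intro k hk hzero
    have h0 : phi k v = 0 := by
      have := DFunLike.congr_fun hzero (⟨v, hv⟩ : E)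
      simpa using this
    rw [phi_apply] at h0
    have hπ : (2 * Real.pi) ≠ 0 := by positivity
    exact hsum_ne k hk (by
      rcases mul_eq_zero.mp h0 with h' | h'
      · exact absurd h' hπ
      · exact h')
  -- eventually in R, all ball averages of nonconstant characters are small
  have hev : ∀ᶠ R : ℝ in atTop, 1 ≤ R ∧ ∀ k ∈ s, k ≠ 0 →
      (volume (closedBall (0:E) R)).toReal⁻¹ *
        ‖∫ t in closedBall (0:E) R,
          char (-k) (torusProj (t : EuclideanSpace ℝ (Fin n)))‖ ≤ ε₂ := by
    refine (eventually_ge_atTop 1).and ?_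
    rw [eventually_all_finset]
    intro k hk
    rcases eq_or_ne k 0 with rfl | hk0
    · filter_upwards with R h0
      exact absurd rfl h0
    · have hdec := ball_avg_decay ((phi (-k)).comp E.subtype)
        (hphiE _ (neg_ne_zero.mpr hk0))
      have hfun : (fun t : E => Complex.exp
            ((((phi (-k)).comp E.subtype) t : ℝ) * Complex.I))
          = fun t : E => char (-k) (torusProj (t : EuclideanSpace ℝ (Fin n))) :=
        funext fun t => by rw [char_torusProj]; rfl
      rw [show (fun R : ℝ => (volume (closedBall (0:E) R)).toReal⁻¹ *
            ‖∫ t in closedBall (0:E) R,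
              Complex.exp ((((phi (-k)).comp E.subtype) t : ℝ) * Complex.I)‖)
          = fun R : ℝ => (volume (closedBall (0:E) R)).toReal⁻¹ *
            ‖∫ t in closedBall (0:E) R,
              char (-k) (torusProj (t : EuclideanSpace ℝ (Fin n)))‖ by
        simp_rw [hfun]] at hdec
      filter_upwards [hdec.eventually_lt_const hε₂0] with R hR _
      exact hR.le
  obtain ⟨R₀, hR₀⟩ := eventually_atTop.mp hev
  refine ⟨R₀, fun R hR u => ?_⟩
  obtain ⟨hR1, hks⟩ := hR₀ R hR
  have hR0 : (0:ℝ) < R := lt_of_lt_of_le one_pos hR1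
  set B : Set E := closedBall (0:E) R with hB_def
  set ν : ℝ≥0∞ := volume B with hν_def
  have hν_pos : 0 < ν := measure_closedBall_pos volume _ hR0
  have hν_fin : ν < ⊤ := measure_closedBall_lt_top
  have hνt : 0 < ν.toReal := toReal_pos hν_pos.ne' hν_fin.ne
  set A : ℝ := ν.toReal⁻¹ with hA_def
  have hA0 : 0 ≤ A := inv_nonneg.mpr hνt.le
  have hAν : A * ν.toReal = 1 := inv_mul_cancel₀ hνt.ne'
  set pr : E → Torus n := fun t => u - torusProj (t : EuclideanSpace ℝ (Fin n)) with hpr_def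
  have hpr_cont : Continuous pr :=
    continuous_const.sub (continuous_torusProj.comp continuous_subtype_val)
  have hIntB : ∀ q : C(Torus n, ℂ), IntegrableOn (fun t => q (pr t)) B :=
    fun q => ((q.continuous.comp hpr_cont).continuousOn).integrableOn_compact
      (isCompact_closedBall _ _)
  have hIntT : ∀ q : C(Torus n, ℂ), Integrable (fun x : Torus n => q x) :=
    fun q => q.continuous.integrable_of_hasCompactSupport
      (IsCompact.of_isClosed_subset isCompact_univ (isClosed_tsupport _) (subset_univ _))
  have hIntChar : ∀ k : Fin n → ℤ,
      IntegrableOn (fun t : E => char k (torusProj (t : EuclideanSpace ℝ (Fin n)))) B :=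
    fun k => (((char k).continuous.comp
      (continuous_torusProj.comp continuous_subtype_val)).continuousOn).integrableOn_compact
      (isCompact_closedBall _ _)
  -- pass to complex values
  set D : ℂ := A • (∫ t in B, g (pr t)) - ∫ x, g x with hD_def
  have habs : |A * (∫ t in B, h (pr t)) - ∫ x, h x| = ‖D‖ := by
    have h1 : ∫ t in B, g (pr t) = ((∫ t in B, h (pr t) : ℝ) : ℂ) := integral_ofReal
    have h2 : ∫ x, g x = ((∫ x, h x : ℝ) : ℂ) := integral_ofReal
    rw [hD_def, h1, h2, Complex.real_smul]
    rw [show (A : ℂ) * ((∫ t in B, h (pr t) : ℝ) : ℂ) - ((∫ x, h x : ℝ) : ℂ)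
        = ((A * (∫ t in B, h (pr t)) - ∫ x, h x : ℝ) : ℂ) by push_cast; ring]
    rw [Complex.norm_real, Real.norm_eq_abs]
  have hgoal : |A * (∫ t in B, h (pr t)) - ∫ x, h x| ≤ ε := by
    rw [habs]
    -- decompose D
    have hsplit : D = (A • ∫ t in B, (g (pr t) - p (pr t)))
        + ((A • ∫ t in B, p (pr t)) - ∫ x, p x)
        + ((∫ x, p x) - ∫ x, g x) := by
      rw [hD_def, integral_sub (hIntB g) (hIntB p), smul_sub]
      ring
    -- term 1
    have hb1 : ‖A • ∫ t in B, (g (pr t) - p (pr t))‖ ≤ ε/3 := by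
      have hbd : ‖∫ t in B, (g (pr t) - p (pr t))‖ ≤ (ε/3) * ν.toReal := by
        refine norm_setIntegral_le_of_norm_le_const hν_fin ?_
        intro x _
        calc ‖g (pr x) - p (pr x)‖ = ‖(g - p) (pr x)‖ := by rw [ContinuousMap.sub_apply]
          _ ≤ ‖g - p‖ := ContinuousMap.norm_coe_le_norm _ _
          _ ≤ ε/3 := hgp.le
      calc ‖A • ∫ t in B, (g (pr t) - p (pr t))‖
          = A * ‖∫ t in B, (g (pr t) - p (pr t))‖ := by
            rw [norm_smul, Real.norm_eq_abs, abs_of_nonneg hA0]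
        _ ≤ A * ((ε/3) * ν.toReal) := mul_le_mul_of_nonneg_left hbd hA0
        _ = (ε/3) * (A * ν.toReal) := by ring
        _ = ε/3 := by rw [hAν, mul_one]
    -- term 3
    have hb3 : ‖(∫ x, p x) - ∫ x, g x‖ ≤ ε/3 := by
      rw [← integral_sub (hIntT p) (hIntT g)]
      have hbd : ∀ x : Torus n, ‖p x - g x‖ ≤ ε/3 := by
        intro x
        calc ‖p x - g x‖ = ‖(g - p) x‖ := by
              rw [ContinuousMap.sub_apply, norm_sub_rev]
          _ ≤ ‖g - p‖ := ContinuousMap.norm_coe_le_norm _ _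
          _ ≤ ε/3 := hgp.le
      calc ‖∫ x, (p x - g x)‖ ≤ (ε/3) * (volume (univ : Set (Torus n))).toReal :=
            norm_integral_le_of_norm_le_const (Eventually.of_forall hbd)
        _ = ε/3 := by rw [measure_univ, ENNReal.toReal_one, mul_one]
    -- term 2
    have hP1 : ∫ t in B, p (pr t) = ∑ k ∈ s, c k •
        (char k u * ∫ t in B, char (-k) (torusProj (t : EuclideanSpace ℝ (Fin n)))) := by
      have hpt : ∀ t : E, p (pr t) = ∑ k ∈ s,
          c k • (char k u * char (-k) (torusProj (t : EuclideanSpace ℝ (Fin n)))) := by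
        intro t
        rw [hps, ContinuousMap.coe_sum, Finset.sum_apply]
        refine Finset.sum_congr rfl fun k _ => ?_
        rw [ContinuousMap.smul_apply]
        congr 1
        exact char_sub k u _
      simp_rw [hpt]
      rw [integral_finset_sum s (f := fun k (t : E) => c k •
          (char k u * char (-k) (torusProj (t : EuclideanSpace ℝ (Fin n)))))
        (fun k _ => (((hIntChar (-k)).const_mul (char k u)).smul (c k)))]
      exact Finset.sum_congr rfl fun k _ => by
        rw [integral_smul, integral_const_mul]
    have hP2 : ∫ x, p x = ∑ k ∈ s, c k • (if k = 0 then (1:ℂ) else 0) := by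
      have hpt : ∀ x : Torus n, p x = ∑ k ∈ s, c k • char k x := by
        intro x
        rw [hps, ContinuousMap.coe_sum, Finset.sum_apply]
        exact Finset.sum_congr rfl fun k _ => by rw [ContinuousMap.smul_apply]
      simp_rw [hpt]
      rw [integral_finset_sum s (f := fun k (x : Torus n) => c k • char k x)
        (fun k _ => (hIntT (char k)).smul (c k))]
      exact Finset.sum_congr rfl fun k _ => by rw [integral_smul, integral_char]
    have hT2 : (A • ∫ t in B, p (pr t)) - ∫ x, p x
        = ∑ k ∈ s, c k • (A • (char k u *
            ∫ t in B, char (-k) (torusProj (t : EuclideanSpace ℝ (Fin n))))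
          - (if k = 0 then (1:ℂ) else 0)) := by
      rw [hP1, hP2, Finset.smul_sum, ← Finset.sum_sub_distrib]
      exact Finset.sum_congr rfl fun k _ => by
        rw [smul_comm A (c k), ← smul_sub]
    have hb2 : ‖(A • ∫ t in B, p (pr t)) - ∫ x, p x‖ ≤ ε/3 := by
      rw [hT2]
      calc ‖∑ k ∈ s, c k • (A • (char k u *
              ∫ t in B, char (-k) (torusProj (t : EuclideanSpace ℝ (Fin n))))
            - (if k = 0 then (1:ℂ) else 0))‖
          ≤ ∑ k ∈ s, ‖c k • (A • (char k u *
              ∫ t in B, char (-k) (torusProj (t : EuclideanSpace ℝ (Fin n))))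
            - (if k = 0 then (1:ℂ) else 0))‖ := norm_sum_le _ _
        _ ≤ ∑ k ∈ s, ‖c k‖ * ε₂ := by
            refine Finset.sum_le_sum fun k hk => ?_
            rw [norm_smul]
            refine mul_le_mul_of_nonneg_left ?_ (norm_nonneg _)
            rcases eq_or_ne k 0 with rfl | hk0
            · have h1 : char (0 : Fin n → ℤ) u = 1 := by rw [char_zero_eq]; rfl
              have h2 : (fun t : E => char (-(0:Fin n → ℤ))
                  (torusProj (t : EuclideanSpace ℝ (Fin n)))) = fun _ => (1:ℂ) := by
                funext t; rw [neg_zero, char_zero_eq]; rfl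
              rw [if_pos rfl, h1, h2, one_mul, setIntegral_const, smul_smul, measureReal_def, ← hν_def,
                hAν, one_smul, sub_self, norm_zero]
              exact hε₂0.le
            · rw [if_neg hk0, sub_zero, norm_smul, Real.norm_eq_abs, abs_of_nonneg hA0,
                norm_mul, char_norm_one, one_mul]
              exact hks k hk hk0
        _ = C * ε₂ := by rw [hC_def, Finset.sum_mul]
        _ ≤ ε/3 := by
            have hle : C ≤ C + 1 := by linarith
            have : C * ε₂ ≤ (C + 1) * ε₂ := mul_le_mul_of_nonneg_right hle hε₂0.le
            refine le_trans this ?_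
            rw [hε₂_def]
            rw [show (C + 1) * (ε / (3 * (C + 1))) = ε/3 by
              field_simp]
    calc ‖D‖ = ‖(A • ∫ t in B, (g (pr t) - p (pr t)))
        + ((A • ∫ t in B, p (pr t)) - ∫ x, p x)
        + ((∫ x, p x) - ∫ x, g x)‖ := by rw [hsplit]
      _ ≤ ‖(A • ∫ t in B, (g (pr t) - p (pr t)))
          + ((A • ∫ t in B, p (pr t)) - ∫ x, p x)‖
          + ‖(∫ x, p x) - ∫ x, g x‖ := norm_add_le _ _
      _ ≤ ‖A • ∫ t in B, (g (pr t) - p (pr t))‖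
          + ‖(A • ∫ t in B, p (pr t)) - ∫ x, p x‖
          + ‖(∫ x, p x) - ∫ x, g x‖ := by
            exact add_le_add (norm_add_le _ _) le_rfl
      _ ≤ ε/3 + ε/3 + ε/3 := by
            exact add_le_add (add_le_add hb1 hb2) hb3
      _ = ε := by ring
  exact hgoal
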